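/- arXiv:2603.27266 — 2 statements merged into one kernel-verified Lean document; each statement's English description precedes it below -/
import Mathlib

section
/- Let r ≥ 1 be an integer and s ∈ ℝ with s > 1. Then t_r(s) = ∑ (−1)^{r+c₁+c₂+⋯+c_r} / (1^{c₁} c₁! · 2^{c₂} c₂! ⋯ r^{c_r} c_r!) · t(s)^{c₁} t(2s)^{c₂} ⋯ t(rs)^{c_r}, where the sum runs over all tuples (c₁,…,c_r) of nonnegative integers satisfying c₁ + 2c₂ + ⋯ + r·c_r = r. -/
/-- The `t`-function for real `s > 1`: `t(s) = ∑_{n≥1} (2n−1)^{-s}`. -/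
noncomputable def tFun (s : ℝ) : ℝ :=
  ∑' n : ℕ+, (((2 * (n : ℕ) - 1 : ℕ) : ℝ) ^ s)⁻¹

/-- The multiple `t`-function at identical arguments:
`t_r(s) = ∑_{n₁ > ⋯ > n_r > 0} ((2n₁−1)⋯(2n_r−1))^{-s}`. -/
noncomputable def multT (r : ℕ) (s : ℝ) : ℝ :=
  ∑' f : {f : Fin r → ℕ+ // StrictAnti f},
    ∏ i, (((2 * (f.1 i : ℕ) - 1 : ℕ) : ℝ) ^ s)⁻¹

/-- The (finite) set of all tuples `(c₁, …, c_r)` of nonnegative integers with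
`c₁ + 2c₂ + ⋯ + r·c_r = r`. -/
def weightedTuples (r : ℕ) : Finset (Fin r → ℕ) :=
  (Fintype.piFinset fun _ : Fin r => Finset.range (r + 1)).filter
    fun c => ∑ i : Fin r, (i.val + 1) * c i = r


open Finset Filter Topology

lemma mem_weightedTuples {r : ℕ} {c : Fin r → ℕ} :
    c ∈ weightedTuples r ↔ ∑ i : Fin r, (i.val + 1) * c i = r := by
  constructor
  · exact fun h => (Finset.mem_filter.1 h).2
  · intro h
    refine Finset.mem_filter.2 ⟨Fintype.mem_piFinset.2 fun i => Finset.mem_range.2 ?_, h⟩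
    have h1 : (i.val + 1) * c i ≤ r := by
      refine le_of_le_of_eq ?_ h
      exact Finset.single_le_sum (f := fun i : Fin r => (i.val + 1) * c i)
        (fun _ _ => Nat.zero_le _) (Finset.mem_univ i)
    have h2 : c i ≤ (i.val + 1) * c i := Nat.le_mul_of_pos_left _ (Nat.succ_pos _)
    omega

noncomputable def Gg (p : ℕ → ℝ) (m : ℕ) : ℝ :=
  ∑ c ∈ weightedTuples m,
    (-1 : ℝ) ^ (m + ∑ i, c i) /
        (∏ i : Fin m, ((((i : ℕ) + 1 : ℕ) : ℝ) ^ c i * ((c i).factorial : ℝ))) *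
      ∏ i : Fin m, p ((i : ℕ) + 1) ^ c i

lemma Gg_zero (p : ℕ → ℝ) : Gg p 0 = 1 := by
  have h : weightedTuples 0 = Finset.univ := by
    ext c; simp [weightedTuples]
  rw [Gg, h]
  rw [Fintype.sum_eq_single (fun i : Fin 0 => 0) (fun c => by
    simp [Subsingleton.elim c (fun i : Fin 0 => 0)])]
  simp

lemma neg_one_pow_congr' {a b : ℕ} (h : a % 2 = b % 2) : (-1 : ℝ) ^ a = (-1) ^ b := by
  conv_lhs => rw [← Nat.div_add_mod a 2]
  conv_rhs => rw [← Nat.div_add_mod b 2]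
  rw [h]
  simp [pow_add, pow_mul]

def extFun (r j : ℕ) (c' : Fin (r - j) → ℕ) : Fin r → ℕ :=
  fun v => (if h : (v : ℕ) < r - j then c' ⟨v, h⟩ else 0) + (if (v : ℕ) = j - 1 then 1 else 0)

def resFun (r : ℕ) (c : Fin r → ℕ) (i : Fin r) : Fin (r - ((i : ℕ) + 1)) → ℕ :=
  fun v => c (Fin.castLE (Nat.sub_le r _) v) - (if (v : ℕ) = (i : ℕ) then 1 else 0)

/-- Product of `A v (extFun r j c' v)` over `Fin r` splits off a `B` factor at `j-1`. -/
lemma prod_extFun {M : Type*} [CommMonoid M] (A B : ℕ → ℕ → M)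
    (hA0 : ∀ v, A v 0 = 1) (hAS : ∀ v m, A v (m + 1) = B v m * A v m)
    {r j : ℕ} (hj1 : 1 ≤ j) (hjr : j ≤ r) (c' : Fin (r - j) → ℕ) :
    ∏ v : Fin r, A (v : ℕ) (extFun r j c' v) =
      B (j - 1) (if h : j - 1 < r - j then c' ⟨j - 1, h⟩ else 0) *
        ∏ v : Fin (r - j), A (v : ℕ) (c' v) := by
  classical
  set D : ℕ := if h : j - 1 < r - j then c' ⟨j - 1, h⟩ else 0 with hD
  have hi : j - 1 < r := by omega
  set i : Fin r := ⟨j - 1, hi⟩ with hidef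
  have hchat : ∀ v : Fin r, v ≠ i →
      extFun r j c' v = (if h : (v : ℕ) < r - j then c' ⟨v, h⟩ else 0) := by
    intro v hv
    have : (v : ℕ) ≠ j - 1 := fun h => hv (Fin.ext h)
    simp [extFun, this]
  have hci : extFun r j c' i = D + 1 := by
    simp [extFun, hidef, hD]
  -- split off index i
  rw [← Finset.mul_prod_erase Finset.univ _ (Finset.mem_univ i)]
  have h2 : ∏ v ∈ Finset.univ.erase i, A (v : ℕ) (extFun r j c' v) =
      ∏ v ∈ Finset.univ.erase i, A (v : ℕ) (if h : (v : ℕ) < r - j then c' ⟨v, h⟩ else 0) :=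
    Finset.prod_congr rfl fun v hv => by rw [hchat v (Finset.ne_of_mem_erase hv)]
  rw [hci, hAS, h2, mul_assoc]
  congr 1
  rw [Finset.mul_prod_erase Finset.univ
    (fun v : Fin r => A (v : ℕ) (if h : (v : ℕ) < r - j then c' ⟨v, h⟩ else 0)) (Finset.mem_univ i)]
  -- now the full product over Fin r of the zero-extension equals the product over Fin (r-j)
  · rw [Fin.prod_univ_eq_prod_range (fun n => A n (if h : n < r - j then c' ⟨n, h⟩ else 0)) r]
    have := Finset.prod_subset (Finset.range_subset_range.2 (Nat.sub_le r j : r - j ≤ r))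
      (f := fun n => A n (if h : n < r - j then c' ⟨n, h⟩ else 0))
      (fun x _ hx => by
        have hxge : ¬ x < r - j := fun hlt => hx (Finset.mem_range.2 hlt)
        simp [hxge, hA0])
    rw [← this, ← Fin.prod_univ_eq_prod_range (fun n => A n (if h : n < r - j then c' ⟨n, h⟩ else 0)) (r - j)]
    exact Finset.prod_congr rfl fun v _ => by simp

/-- Additive analog of `prod_extFun`. -/
lemma sum_extFun {M : Type*} [AddCommMonoid M] (A B : ℕ → ℕ → M)
    (hA0 : ∀ v, A v 0 = 0) (hAS : ∀ v m, A v (m + 1) = B v m + A v m)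
    {r j : ℕ} (hj1 : 1 ≤ j) (hjr : j ≤ r) (c' : Fin (r - j) → ℕ) :
    ∑ v : Fin r, A (v : ℕ) (extFun r j c' v) =
      B (j - 1) (if h : j - 1 < r - j then c' ⟨j - 1, h⟩ else 0) +
        ∑ v : Fin (r - j), A (v : ℕ) (c' v) := by
  classical
  set D : ℕ := if h : j - 1 < r - j then c' ⟨j - 1, h⟩ else 0 with hD
  have hi : j - 1 < r := by omega
  set i : Fin r := ⟨j - 1, hi⟩ with hidef
  have hchat : ∀ v : Fin r, v ≠ i →
      extFun r j c' v = (if h : (v : ℕ) < r - j then c' ⟨v, h⟩ else 0) := by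
    intro v hv
    have : (v : ℕ) ≠ j - 1 := fun h => hv (Fin.ext h)
    simp [extFun, this]
  have hci : extFun r j c' i = D + 1 := by
    simp [extFun, hidef, hD]
  rw [← Finset.add_sum_erase Finset.univ _ (Finset.mem_univ i)]
  have h2 : ∑ v ∈ Finset.univ.erase i, A (v : ℕ) (extFun r j c' v) =
      ∑ v ∈ Finset.univ.erase i, A (v : ℕ) (if h : (v : ℕ) < r - j then c' ⟨v, h⟩ else 0) :=
    Finset.sum_congr rfl fun v hv => by rw [hchat v (Finset.ne_of_mem_erase hv)]
  rw [hci, hAS, h2, add_assoc]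
  congr 1
  rw [Finset.add_sum_erase Finset.univ
    (fun v : Fin r => A (v : ℕ) (if h : (v : ℕ) < r - j then c' ⟨v, h⟩ else 0)) (Finset.mem_univ i)]
  · rw [Fin.sum_univ_eq_sum_range (fun n => A n (if h : n < r - j then c' ⟨n, h⟩ else 0)) r]
    have := Finset.sum_subset (Finset.range_subset_range.2 (Nat.sub_le r j : r - j ≤ r))
      (f := fun n => A n (if h : n < r - j then c' ⟨n, h⟩ else 0))
      (fun x _ hx => by
        have hxge : ¬ x < r - j := fun hlt => hx (Finset.mem_range.2 hlt)
        simp [hxge, hA0])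
    rw [← this, ← Fin.sum_univ_eq_sum_range (fun n => A n (if h : n < r - j then c' ⟨n, h⟩ else 0)) (r - j)]
    exact Finset.sum_congr rfl fun v _ => by simp

/-- If `c` is a weighted tuple of weight `r` and `c i ≠ 0`, entries beyond `r - (i+1)`
(decremented at `i`) vanish. -/
lemma tail_zero {r : ℕ} {c : Fin r → ℕ} (hc : ∑ v : Fin r, ((v : ℕ) + 1) * c v = r)
    {i : Fin r} (hci : c i ≠ 0) {v : Fin r} (hv : r - ((i : ℕ) + 1) ≤ (v : ℕ)) :
    c v - (if v = i then 1 else 0) = 0 := by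
  classical
  have hterm : ∀ w : Fin r, ((w : ℕ) + 1) * c w ≤ r := by
    intro w
    refine le_of_le_of_eq ?_ hc
    exact Finset.single_le_sum (f := fun w : Fin r => ((w : ℕ) + 1) * c w)
      (fun _ _ => Nat.zero_le _) (Finset.mem_univ w)
  by_cases hvi : v = i
  · subst hvi
    -- show c v = 1
    have h1 : ((v : ℕ) + 1) * c v ≤ r := hterm v
    have h2 : 1 ≤ c v := Nat.one_le_iff_ne_zero.2 hci
    -- if c v ≥ 2 then (v+1)*2 ≤ r, contradicting r - (v+1) ≤ v < r
    rcases Nat.lt_or_ge (c v) 2 with h | h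
    · simp; omega
    · exfalso
      have : ((v : ℕ) + 1) * 2 ≤ ((v : ℕ) + 1) * c v := Nat.mul_le_mul_left _ h
      have hvr : (v : ℕ) < r := v.isLt
      omega
  · -- two distinct terms
    have hpair : ((i : ℕ) + 1) * c i + ((v : ℕ) + 1) * c v ≤ r := by
      have hsub : ({i, v} : Finset (Fin r)) ⊆ Finset.univ := Finset.subset_univ _
      have := Finset.sum_le_sum_of_subset_of_nonneg hsub
        (f := fun w : Fin r => ((w : ℕ) + 1) * c w) (fun _ _ _ => Nat.zero_le _)
      rw [Finset.sum_pair (fun h => hvi (h.symm))] at this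
      refine le_trans ?_ (le_of_eq hc)
      simpa using this
    have h2 : 1 ≤ c i := Nat.one_le_iff_ne_zero.2 hci
    have h3 : (i : ℕ) + 1 ≤ ((i : ℕ) + 1) * c i := Nat.le_mul_of_pos_right _ h2
    rcases Nat.eq_zero_or_pos (c v) with h | h
    · simp [h]
    · exfalso
      have h4 : (v : ℕ) + 1 ≤ ((v : ℕ) + 1) * c v := Nat.le_mul_of_pos_right _ h
      have h5 : ((i : ℕ) + 1) + ((v : ℕ) + 1) ≤ ((i : ℕ) + 1) * c i + ((v : ℕ) + 1) * c v :=
        Nat.add_le_add h3 h4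
      have h6 : ((i : ℕ) + 1) + ((v : ℕ) + 1) ≤ r := le_trans h5 hpair
      omega

/-- Truncation of a sum over `Fin r` to `Fin m` when entries vanish above `m`. -/
lemma sum_trunc {M : Type*} [AddCommMonoid M] (A : ℕ → ℕ → M) (hA0 : ∀ v, A v 0 = 0)
    {r m : ℕ} (h : m ≤ r) (d : Fin r → ℕ) (hd : ∀ v : Fin r, m ≤ (v : ℕ) → d v = 0) :
    ∑ v : Fin r, A (v : ℕ) (d v) = ∑ v : Fin m, A (v : ℕ) (d (Fin.castLE h v)) := by
  classical
  have e1 : ∑ v : Fin r, A (v : ℕ) (d v) =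
      ∑ n ∈ Finset.range r, A n (if hn : n < r then d ⟨n, hn⟩ else 0) := by
    rw [← Fin.sum_univ_eq_sum_range (fun n => A n (if hn : n < r then d ⟨n, hn⟩ else 0)) r]
    exact Finset.sum_congr rfl fun v _ => by simp
  have e2 := Finset.sum_subset (Finset.range_subset_range.2 h)
    (f := fun n => A n (if hn : n < r then d ⟨n, hn⟩ else 0))
    (fun x hx hxm => by
      have h1 : x < r := Finset.mem_range.1 hx
      have h2 : m ≤ x := le_of_not_gt fun hlt => hxm (Finset.mem_range.2 hlt)
      simp only [dif_pos h1]
      rw [hd ⟨x, h1⟩ h2]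
      exact hA0 x)
  rw [e1, ← e2, ← Fin.sum_univ_eq_sum_range (fun n => A n (if hn : n < r then d ⟨n, hn⟩ else 0)) m]
  refine Finset.sum_congr rfl fun v _ => ?_
  have hv : (v : ℕ) < r := lt_of_lt_of_le v.isLt h
  simp [hv]
  rfl

/-- Sigma extension helper. -/
lemma sigma_ext_fin {r : ℕ} {j₁ j₂ : ℕ} (h : j₁ = j₂) {f : Fin (r - j₁) → ℕ}
    {g : Fin (r - j₂) → ℕ}
    (hfg : ∀ (v : ℕ) (h1 : v < r - j₁) (h2 : v < r - j₂), f ⟨v, h1⟩ = g ⟨v, h2⟩) :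
    (⟨j₁, f⟩ : Σ j : ℕ, Fin (r - j) → ℕ) = ⟨j₂, g⟩ := by
  subst h
  exact congrArg (Sigma.mk j₁) (funext fun v => by simpa using hfg (v : ℕ) v.isLt v.isLt)

lemma sigma_const_ext {α β : Type*} {a₁ a₂ : α} {b₁ b₂ : β} (h1 : a₁ = a₂) (h2 : b₁ = b₂) :
    (⟨a₁, b₁⟩ : Σ _ : α, β) = ⟨a₂, b₂⟩ := by subst h1; subst h2; rfl

theorem girard_rec (p : ℕ → ℝ) (r : ℕ) :
    (r : ℝ) * Gg p r = ∑ j ∈ Finset.Icc 1 r, (-1 : ℝ) ^ (j + 1) * p j * Gg p (r - j) := by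
  rcases Nat.eq_zero_or_pos r with rfl | hr
  · simp
  classical
  have hRHS : ∑ j ∈ Finset.Icc 1 r, (-1 : ℝ) ^ (j + 1) * p j * Gg p (r - j)
      = ∑ x ∈ (Finset.Icc 1 r).sigma (fun j => weightedTuples (r - j)),
          (-1 : ℝ) ^ (x.1 + 1) * p x.1 *
            ((-1 : ℝ) ^ ((r - x.1) + ∑ v, x.2 v) /
              (∏ v : Fin (r - x.1), ((((v : ℕ) + 1 : ℕ) : ℝ) ^ (x.2 v) * ((x.2 v).factorial : ℝ))) *
              ∏ v : Fin (r - x.1), p ((v : ℕ) + 1) ^ (x.2 v)) := by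
    rw [Finset.sum_sigma]
    exact Finset.sum_congr rfl fun j _ => by rw [Gg, Finset.mul_sum]
  have hLHS : (r : ℝ) * Gg p r
      = ∑ x ∈ (weightedTuples r).sigma (fun c => Finset.univ.filter fun i : Fin r => c i ≠ 0),
          ((((x.2 : ℕ) + 1) * x.1 x.2 : ℕ) : ℝ) *
            ((-1 : ℝ) ^ (r + ∑ v, x.1 v) /
              (∏ v : Fin r, ((((v : ℕ) + 1 : ℕ) : ℝ) ^ (x.1 v) * ((x.1 v).factorial : ℝ))) *
              ∏ v : Fin r, p ((v : ℕ) + 1) ^ (x.1 v)) := by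
    rw [Gg, Finset.mul_sum, Finset.sum_sigma]
    refine Finset.sum_congr rfl fun c hc => ?_
    have hcw := mem_weightedTuples.1 hc
    set T : ℝ := (-1 : ℝ) ^ (r + ∑ v, c v) /
        (∏ v : Fin r, ((((v : ℕ) + 1 : ℕ) : ℝ) ^ (c v) * ((c v).factorial : ℝ))) *
        ∏ v : Fin r, p ((v : ℕ) + 1) ^ (c v) with hT
    have h1 : (r : ℝ) * T = ∑ i : Fin r, ((((i : ℕ) + 1) * c i : ℕ) : ℝ) * T := by
      rw [← Finset.sum_mul, ← Nat.cast_sum]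
      congr 2
      exact hcw.symm
    rw [h1]
    exact (Finset.sum_filter_of_ne (fun i _ hne => by
      intro h0
      apply hne
      rw [h0, Nat.mul_zero, Nat.cast_zero, zero_mul])).symm
  rw [hLHS, hRHS]
  refine (Finset.sum_nbij'
    (fun x : Σ j : ℕ, Fin (r - j) → ℕ =>
      (⟨extFun r x.1 x.2, ⟨(x.1 - 1) % r, Nat.mod_lt _ hr⟩⟩ : Σ _ : Fin r → ℕ, Fin r))
    (fun y : Σ _ : Fin r → ℕ, Fin r =>
      (⟨(y.2 : ℕ) + 1, resFun r y.1 y.2⟩ : Σ j : ℕ, Fin (r - j) → ℕ))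
    ?_ ?_ ?_ ?_ ?_).symm
  · -- maps S₁ → S₂
    rintro ⟨j, c'⟩ hx
    rw [Finset.mem_sigma] at hx ⊢
    obtain ⟨hj, hc'⟩ := hx
    rw [Finset.mem_Icc] at hj
    dsimp only at *
    have hc'w := mem_weightedTuples.1 hc'
    have hmod : (j - 1) % r = j - 1 := Nat.mod_eq_of_lt (by omega)
    constructor
    · rw [mem_weightedTuples]
      have h2 : ∑ i : Fin r, ((i : ℕ) + 1) * extFun r j c' i
          = (j - 1 + 1) + ∑ v : Fin (r - j), ((v : ℕ) + 1) * c' v := by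
        simpa using sum_extFun (M := ℕ) (fun v m => (v + 1) * m) (fun v _ => v + 1)
          (fun v => by simp) (fun v m => by ring) hj.1 hj.2 c'
      rw [h2, hc'w]
      omega
    · simp only [Finset.mem_filter, Finset.mem_univ, true_and]
      show extFun r j c' ⟨(j - 1) % r, Nat.mod_lt _ hr⟩ ≠ 0
      unfold extFun
      simp only [hmod]
      simp
  · -- maps S₂ → S₁
    rintro ⟨c, i⟩ hy
    rw [Finset.mem_sigma] at hy ⊢
    obtain ⟨hc, hi⟩ := hy
    dsimp only at *
    have hcw := mem_weightedTuples.1 hc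
    have hci : c i ≠ 0 := by simpa using (Finset.mem_filter.1 hi).2
    constructor
    · exact Finset.mem_Icc.2 ⟨by omega, by have := i.isLt; omega⟩
    · rw [mem_weightedTuples]
      have hstep1 : (∑ v : Fin r, ((v : ℕ) + 1) * (c v - if v = i then 1 else 0)) + ((i : ℕ) + 1)
          = r := by
        have hpt : ∀ v : Fin r, ((v : ℕ) + 1) * (c v - if v = i then 1 else 0)
            + (if v = i then (v : ℕ) + 1 else 0) = ((v : ℕ) + 1) * c v := by
          intro v
          by_cases h : v = i
          · obtain ⟨n, hn⟩ := Nat.exists_eq_succ_of_ne_zero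
              (show c v ≠ 0 by rw [h]; exact hci)
            simp only [if_pos h, hn, Nat.succ_sub_one, Nat.succ_eq_add_one]
            ring
          · simp [h]
        calc (∑ v : Fin r, ((v : ℕ) + 1) * (c v - if v = i then 1 else 0)) + ((i : ℕ) + 1)
            = ∑ v : Fin r, (((v : ℕ) + 1) * (c v - if v = i then 1 else 0)
                + (if v = i then (v : ℕ) + 1 else 0)) := by
              rw [Finset.sum_add_distrib]
              congr 1
              simp
          _ = ∑ v : Fin r, ((v : ℕ) + 1) * c v := Finset.sum_congr rfl fun v _ => hpt v
          _ = r := hcw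
      have hstep2 : ∑ v : Fin r, ((v : ℕ) + 1) * (c v - if v = i then 1 else 0)
          = ∑ v : Fin (r - ((i : ℕ) + 1)), ((v : ℕ) + 1) * resFun r c i v := by
        rw [sum_trunc (M := ℕ) (fun v m => (v + 1) * m) (fun v => by simp)
          (Nat.sub_le r ((i : ℕ) + 1)) (fun v => c v - if v = i then 1 else 0)
          (fun v hv => tail_zero hcw hci hv)]
        refine Finset.sum_congr rfl fun v _ => ?_
        simp [resFun, Fin.ext_iff]
      omega
  · -- left inverse
    rintro ⟨j, c'⟩ hx
    rw [Finset.mem_sigma] at hx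
    obtain ⟨hj, _⟩ := hx
    rw [Finset.mem_Icc] at hj
    dsimp only at *
    have hmod : (j - 1) % r = j - 1 := Nat.mod_eq_of_lt (by omega)
    refine sigma_ext_fin (by simp [hmod]; omega) ?_
    intro v h1 h2
    have hvlt : v < r - j := h2
    show extFun r j c' (Fin.castLE _ _) - _ = c' ⟨v, h2⟩
    unfold extFun
    simp only [Fin.coe_castLE]
    rw [dif_pos hvlt]
    simp only [hmod]
    rw [Nat.add_sub_cancel]
  · -- right inverse
    rintro ⟨c, i⟩ hy
    rw [Finset.mem_sigma] at hy
    obtain ⟨hc, hi2⟩ := hy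
    dsimp only at *
    have hcw := mem_weightedTuples.1 hc
    have hci : c i ≠ 0 := by simpa using (Finset.mem_filter.1 hi2).2
    have hidx : (((i : ℕ) + 1) - 1) % r = (i : ℕ) := by
      simp [Nat.mod_eq_of_lt i.isLt]
    have h1 : extFun r ((i : ℕ) + 1) (resFun r c i) = c := by
      funext v
      by_cases hv : (v : ℕ) < r - ((i : ℕ) + 1)
      · unfold extFun resFun
        rw [dif_pos hv]
        simp only [Fin.coe_castLE, Nat.add_sub_cancel]
        have hcast : (Fin.castLE (Nat.sub_le r _) (⟨(v : ℕ), hv⟩ : Fin (r - ((i : ℕ) + 1)))) = v :=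
          Fin.ext rfl
        rw [hcast]
        by_cases hvi : (v : ℕ) = (i : ℕ)
        · have hv2 : v = i := Fin.ext hvi
          have h2 : 1 ≤ c v := by rw [hv2]; exact Nat.one_le_iff_ne_zero.2 hci
          rw [if_pos hvi]
          omega
        · simp [hvi]
      · unfold extFun
        rw [dif_neg hv]
        have htz := tail_zero hcw hci (le_of_not_gt hv)
        by_cases hvi : (v : ℕ) = (i : ℕ)
        · have hv2 : v = i := Fin.ext hvi
          subst hv2
          have h1l : c v - 1 = 0 := by simpa using htz
          have h2l : 1 ≤ c v := Nat.one_le_iff_ne_zero.2 hci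
          simp [Nat.add_sub_cancel]
          omega
        · have hv2 : v ≠ i := fun h => hvi (congrArg Fin.val h)
          have h1l : c v = 0 := by simpa [hv2] using htz
          simp [Nat.add_sub_cancel, hvi, h1l]
    exact sigma_const_ext h1 (Fin.ext (by simpa using hidx))
  · -- term equality
    rintro ⟨j, c'⟩ hx
    rw [Finset.mem_sigma] at hx
    obtain ⟨hj, hc'⟩ := hx
    rw [Finset.mem_Icc] at hj
    dsimp only at *
    have hj1 := hj.1
    have hjr := hj.2
    have hmod : (j - 1) % r = j - 1 := Nat.mod_eq_of_lt (by omega)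
    set D : ℕ := if h : j - 1 < r - j then c' ⟨j - 1, h⟩ else 0 with hD
    have hSig : ∑ v : Fin r, extFun r j c' v = 1 + ∑ v : Fin (r - j), c' v := by
      simpa using sum_extFun (M := ℕ) (fun _ m => m) (fun _ _ => 1) (fun v => rfl)
        (fun v m => by omega) hj1 hjr c'
    have hcoef : (∏ v : Fin r, ((((v : ℕ) + 1 : ℕ) : ℝ) ^ (extFun r j c' v)
          * ((extFun r j c' v).factorial : ℝ)))
        = ((j - 1 + 1 : ℕ) : ℝ) * ((D + 1 : ℕ) : ℝ) *
          ∏ v : Fin (r - j), ((((v : ℕ) + 1 : ℕ) : ℝ) ^ (c' v) * ((c' v).factorial : ℝ)) := by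
      have h := prod_extFun (M := ℝ) (fun n m => ((n + 1 : ℕ) : ℝ) ^ m * (m.factorial : ℝ))
        (fun n m => ((n + 1 : ℕ) : ℝ) * ((m + 1 : ℕ) : ℝ))
        (fun n => by simp) (fun n m => by
          push_cast [Nat.factorial_succ, pow_succ]
          ring) hj1 hjr c'
      rw [h, ← hD, mul_assoc]
    have hprod : (∏ v : Fin r, p ((v : ℕ) + 1) ^ (extFun r j c' v))
        = p j * ∏ v : Fin (r - j), p ((v : ℕ) + 1) ^ (c' v) := by
      have h := prod_extFun (M := ℝ) (fun n m => p (n + 1) ^ m) (fun n _ => p (n + 1))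
        (fun n => pow_zero _) (fun n m => by rw [pow_succ]; ring) hj1 hjr c'
      rw [h]
      have hj' : j - 1 + 1 = j := by omega
      rw [hj']
    have hval : extFun r j c' ⟨(j - 1) % r, Nat.mod_lt _ hr⟩ = D + 1 := by
      unfold extFun
      simp only [hmod, hD]
      simp
    simp only [hval, hSig, hcoef, hprod]
    have hQ' : (∏ v : Fin (r - j), ((((v : ℕ) + 1 : ℕ) : ℝ) ^ (c' v) * ((c' v).factorial : ℝ))) ≠ 0 := by
      refine ne_of_gt (Finset.prod_pos fun v _ => mul_pos (pow_pos (by positivity) _) ?_)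
      exact_mod_cast Nat.factorial_pos _
    have hK : ((j - 1 + 1 : ℕ) : ℝ) * ((D + 1 : ℕ) : ℝ) ≠ 0 := by positivity
    have hsign : (-1 : ℝ) ^ (r + (1 + ∑ v : Fin (r - j), c' v))
        = (-1 : ℝ) ^ (j + 1) * (-1 : ℝ) ^ ((r - j) + ∑ v : Fin (r - j), c' v) := by
      rw [← pow_add]
      exact neg_one_pow_congr' (by omega)
    rw [hmod, hsign]
    push_cast
    field_simp

noncomputable def Pp (x : ℕ+ → ℝ) (T : Finset ℕ+) (k : ℕ) : ℝ := ∑ n ∈ T, x n ^ k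

noncomputable def Ee (x : ℕ+ → ℝ) (T : Finset ℕ+) (k : ℕ) : ℝ :=
  ∑ A ∈ T.powersetCard k, ∏ n ∈ A, x n

lemma newton_real (x : ℕ+ → ℝ) (T : Finset ℕ+) (k : ℕ) :
    (k : ℝ) * Ee x T k
      = ∑ j ∈ Finset.Icc 1 k, (-1 : ℝ) ^ (j + 1) * Pp x T j * Ee x T (k - j) := by
  classical
  have hE : ∀ m, MvPolynomial.aeval (fun i : ↥T => x i.1) (MvPolynomial.esymm (↥T) ℝ m)
      = Ee x T m := by
    intro m
    rw [MvPolynomial.aeval_esymm_eq_multiset_esymm]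
    have h1 : (Finset.univ.val.map fun i : ↥T => x i.1) = T.val.map x := by
      rw [Finset.univ_eq_attach]
      exact Multiset.attach_map_val' T.val x
    rw [h1, Finset.esymm_map_val]
    rfl
  have hP : ∀ m, MvPolynomial.aeval (fun i : ↥T => x i.1) (MvPolynomial.psum (↥T) ℝ m)
      = Pp x T m := by
    intro m
    rw [MvPolynomial.psum, map_sum]
    simp only [map_pow, MvPolynomial.aeval_X]
    exact Finset.sum_coe_sort T (fun n => x n ^ m)
  have h2 := congrArg (MvPolynomial.aeval (fun i : ↥T => x i.1))
    (MvPolynomial.mul_esymm_eq_sum (↥T) ℝ k)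
  simp only [map_mul, map_natCast, map_sum, map_pow, map_neg, map_one, hE, hP] at h2
  rw [h2, Finset.mul_sum]
  refine Finset.sum_nbij' (fun a : ℕ × ℕ => a.2) (fun j => (k - j, j)) ?_ ?_ ?_ ?_ ?_
  · rintro ⟨a, b⟩ ha
    have h3 := Finset.mem_filter.1 ha
    have h4 := Finset.HasAntidiagonal.mem_antidiagonal.1 h3.1
    have h5 := h3.2
    simp only at h4 h5 ⊢
    exact Finset.mem_Icc.2 (by omega)
  · intro j hj
    have h3 := Finset.mem_Icc.1 hj
    refine Finset.mem_filter.2 ⟨Finset.HasAntidiagonal.mem_antidiagonal.2 (by omega),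
      by dsimp only; omega⟩
  · rintro ⟨a, b⟩ ha
    have h3 := Finset.mem_filter.1 ha
    have h4 := Finset.HasAntidiagonal.mem_antidiagonal.1 h3.1
    simp only at h4 ⊢
    exact Prod.ext (by omega) rfl
  · intro j hj
    rfl
  · rintro ⟨a, b⟩ ha
    have h3 := Finset.mem_filter.1 ha
    have h4 := Finset.HasAntidiagonal.mem_antidiagonal.1 h3.1
    have h5 := h3.2
    simp only at h4 h5 ⊢
    have ha1 : a = k - b := by omega
    subst ha1
    have hsign : (-1 : ℝ) ^ (k + 1) * (-1 : ℝ) ^ (k - b) = (-1 : ℝ) ^ (b + 1) := by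
      rw [← pow_add]
      exact neg_one_pow_congr' (by omega)
    calc (-1 : ℝ) ^ (k + 1) * ((-1 : ℝ) ^ (k - b) * Ee x T (k - b) * Pp x T b)
        = ((-1 : ℝ) ^ (k + 1) * (-1 : ℝ) ^ (k - b)) * Ee x T (k - b) * Pp x T b := by ring
      _ = (-1 : ℝ) ^ (b + 1) * Pp x T b * Ee x T (k - b) := by rw [hsign]; ring

lemma Ee_eq_Gg (x : ℕ+ → ℝ) (T : Finset ℕ+) (r : ℕ) : Ee x T r = Gg (Pp x T) r := by
  induction r using Nat.strong_induction_on with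
  | _ r ih =>
    rcases Nat.eq_zero_or_pos r with rfl | hr
    · rw [Gg_zero]
      unfold Ee
      rw [Finset.powersetCard_zero]
      simp
    · have h1 := newton_real x T r
      have h2 := girard_rec (Pp x T) r
      have h3 : ∑ j ∈ Finset.Icc 1 r, (-1 : ℝ) ^ (j + 1) * Pp x T j * Ee x T (r - j)
          = ∑ j ∈ Finset.Icc 1 r, (-1 : ℝ) ^ (j + 1) * Pp x T j * Gg (Pp x T) (r - j) :=
        Finset.sum_congr rfl fun j hj => by
          rw [ih (r - j) (by have := (Finset.mem_Icc.1 hj).1; omega)]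
      have h4 : (r : ℝ) * Ee x T r = (r : ℝ) * Gg (Pp x T) r := by rw [h1, h3, ← h2]
      exact mul_left_cancel₀ (Nat.cast_ne_zero.2 (by omega)) h4

/-- For `r ≥ 1` and real `s > 1`:
`t_r(s) = ∑_{c₁+2c₂+⋯+rc_r=r} (−1)^{r+c₁+⋯+c_r}/(1^{c₁}c₁!⋯r^{c_r}c_r!) · t(s)^{c₁}⋯t(rs)^{c_r}`. -/
theorem multT_explicit (r : ℕ) (hr : 1 ≤ r) (s : ℝ) (hs : 1 < s) :
    multT r s =
      ∑ c ∈ weightedTuples r,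
        (-1 : ℝ) ^ (r + ∑ i, c i) /
          (∏ i : Fin r, ((((i : ℕ) + 1 : ℕ) : ℝ) ^ c i * ((c i).factorial : ℝ))) *
        ∏ i : Fin r, tFun ((((i : ℕ) + 1 : ℕ) : ℝ) * s) ^ c i := by
  classical
  set a : ℕ+ → ℝ := fun n => (((2 * (n : ℕ) - 1 : ℕ) : ℝ) ^ s)⁻¹ with ha
  have ha0 : ∀ n, 0 ≤ a n := fun n => inv_nonneg.2 (Real.rpow_nonneg (Nat.cast_nonneg _) _)
  -- summability of a
  have hsa : Summable a := by
    have h1 : Summable (fun m : ℕ => ((m : ℝ) ^ s)⁻¹) := Real.summable_nat_rpow_inv.2 hs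
    have h2 : Function.Injective (fun n : ℕ+ => 2 * (n : ℕ) - 1) := by
      intro m n h
      dsimp only at h
      have hm := m.pos
      have hn := n.pos
      exact PNat.coe_injective (by omega)
    exact h1.comp_injective h2
  have hle1 : ∀ n, a n ≤ 1 := by
    intro n
    have h1 : (1 : ℝ) ≤ ((2 * (n : ℕ) - 1 : ℕ) : ℝ) := by
      have hn := n.pos
      have h0 : 1 ≤ 2 * (n : ℕ) - 1 := by omega
      exact_mod_cast h0
    have h2 : (1 : ℝ) ≤ ((2 * (n : ℕ) - 1 : ℕ) : ℝ) ^ s :=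
      Real.one_le_rpow h1 (le_of_lt (lt_trans one_pos hs))
    exact inv_le_one_of_one_le₀ h2
  have hsak : ∀ k, 1 ≤ k → Summable (fun n => a n ^ k) := by
    intro k hk
    refine Summable.of_nonneg_of_le (fun n => pow_nonneg (ha0 n) k) (fun n => ?_) hsa
    calc a n ^ k ≤ a n ^ 1 := pow_le_pow_of_le_one (ha0 n) (hle1 n) hk
      _ = a n := pow_one _
  -- power sums
  have htF : ∀ k : ℕ, 1 ≤ k → HasSum (fun n : ℕ+ => a n ^ k) (tFun ((k : ℝ) * s)) := by
    intro k hk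
    have heq : tFun ((k : ℝ) * s) = ∑' n : ℕ+, a n ^ k := by
      refine tsum_congr fun n => ?_
      have hc0 : (0 : ℝ) ≤ ((2 * (n : ℕ) - 1 : ℕ) : ℝ) := Nat.cast_nonneg _
      rw [mul_comm ((k : ℕ) : ℝ) s, Real.rpow_mul hc0, Real.rpow_natCast, inv_pow]
    rw [heq]
    exact (hsak k hk).hasSum
  -- summability over tuples
  have hFt : ∀ m : ℕ, Summable (fun f : Fin m → ℕ+ => ∏ i, a (f i)) := by
    intro m
    induction m with
    | zero => exact Summable.of_finite
    | succ m ihm =>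
      have h1 := hsa.mul_of_nonneg ihm ha0 (fun f => Finset.prod_nonneg fun i _ => ha0 _)
      have h2 := h1.comp_injective (Fin.consEquiv fun _ => ℕ+).symm.injective
      refine h2.congr fun f => ?_
      simp only [Function.comp_apply]
      exact (Fin.prod_univ_succ fun i => a (f i)).symm
  have hsorted : Summable (fun f : {f : Fin r → ℕ+ // StrictAnti f} => ∏ i, a (f.1 i)) :=
    (hFt r).comp_injective Subtype.val_injective
  have hmt : HasSum (fun f : {f : Fin r → ℕ+ // StrictAnti f} => ∏ i, a (f.1 i)) (multT r s) := by
    have heq : multT r s = ∑' f : {f : Fin r → ℕ+ // StrictAnti f}, ∏ i, a (f.1 i) := rfl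
    rw [heq]
    exact hsorted.hasSum
  -- the sorting equivalence
  have hΦ : ∀ A : {A : Finset ℕ+ // A.card = r}, StrictAnti (fun i : Fin r => A.1.orderEmbOfFin A.2 i.rev) := by
    intro A i j hij
    exact (A.1.orderEmbOfFin A.2).strictMono (Fin.rev_lt_rev.2 hij)
  set Φ : {A : Finset ℕ+ // A.card = r} → {f : Fin r → ℕ+ // StrictAnti f} :=
    fun A => ⟨fun i => A.1.orderEmbOfFin A.2 i.rev, hΦ A⟩ with hΦdef
  have hbij : Function.Bijective Φ := by
    constructor
    · intro A B h
      have h1 : ∀ i : Fin r, A.1.orderEmbOfFin A.2 i.rev = B.1.orderEmbOfFin B.2 i.rev :=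
        fun i => congrFun (congrArg Subtype.val h) i
      have h2 : ∀ i : Fin r, A.1.orderEmbOfFin A.2 i = B.1.orderEmbOfFin B.2 i := by
        intro i
        have := h1 i.rev
        rwa [Fin.rev_rev] at this
      have h3 : (A.1 : Set ℕ+) = (B.1 : Set ℕ+) := by
        rw [← Finset.range_orderEmbOfFin A.1 A.2, ← Finset.range_orderEmbOfFin B.1 B.2]
        exact congrArg Set.range (funext h2)
      exact Subtype.ext (Finset.coe_injective h3)
    · rintro ⟨f, hf⟩
      set A : Finset ℕ+ := Finset.univ.map ⟨f, hf.injective⟩ with hA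
      have hAc : A.card = r := by rw [hA, Finset.card_map, Finset.card_univ, Fintype.card_fin]
      refine ⟨⟨A, hAc⟩, Subtype.ext ?_⟩
      have hg : StrictMono (fun i : Fin r => f i.rev) := fun i j hij => hf (Fin.rev_lt_rev.2 hij)
      have hmem : ∀ i : Fin r, f i.rev ∈ A := fun i => by
        rw [hA]; exact Finset.mem_map_of_mem _ (Finset.mem_univ _)
      have huniq := Finset.orderEmbOfFin_unique hAc hmem hg
      funext i
      show A.orderEmbOfFin hAc i.rev = f i
      rw [← congrFun huniq i.rev, Fin.rev_rev]
  have hcard : HasSum (fun A : {A : Finset ℕ+ // A.card = r} => ∏ n ∈ A.1, a n) (multT r s) := by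
    have h1 := (Equiv.hasSum_iff (Equiv.ofBijective Φ hbij)).2 hmt
    have hfg : ((fun f : {f : Fin r → ℕ+ // StrictAnti f} => ∏ i, a (f.1 i)) ∘
        (Equiv.ofBijective Φ hbij)) = fun A => ∏ n ∈ A.1, a n := by
      funext A
      show ∏ i : Fin r, a ((Φ A).1 i) = ∏ n ∈ A.1, a n
      have h2 : ∏ i : Fin r, a ((Φ A).1 i) = ∏ i : Fin r, a (A.1.orderEmbOfFin A.2 i) := by
        show ∏ i : Fin r, a (A.1.orderEmbOfFin A.2 i.rev) = _
        exact Equiv.prod_comp (Fin.revPerm) (fun i => a (A.1.orderEmbOfFin A.2 i))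
      rw [h2]
      refine Finset.prod_nbij (fun i => A.1.orderEmbOfFin A.2 i) ?_ ?_ ?_ ?_
      · exact fun i _ => Finset.orderEmbOfFin_mem _ _ _
      · exact fun i _ j _ h => (A.1.orderEmbOfFin A.2).injective h
      · intro x hx
        have : x ∈ Set.range (A.1.orderEmbOfFin A.2) := by
          rw [Finset.range_orderEmbOfFin]; exact_mod_cast hx
        obtain ⟨i, hi⟩ := this
        exact ⟨i, by simp, hi⟩
      · exact fun i _ => rfl
    rw [hfg] at h1
    exact h1
  have hind : HasSum (fun A : Finset ℕ+ => if A.card = r then ∏ n ∈ A, a n else 0)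
      (multT r s) := by
    have h1 := (hasSum_subtype_iff_indicator
      (s := {A : Finset ℕ+ | A.card = r}) (f := fun A => ∏ n ∈ A, a n)).1 hcard
    have hfg : ({A : Finset ℕ+ | A.card = r}.indicator fun A => ∏ n ∈ A, a n)
        = fun A : Finset ℕ+ => if A.card = r then ∏ n ∈ A, a n else 0 := by
      funext A
      rw [Set.indicator_apply]
      simp [Set.mem_setOf_eq]
    rw [hfg] at h1
    exact h1
  -- exhaustion
  have hmono : Monotone (fun N : ℕ+ => (Finset.Iic N).powerset) := fun M N h =>
    Finset.powerset_mono.2 (Finset.Iic_subset_Iic.2 h)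
  have hex : ∀ A : Finset ℕ+, ∃ N : ℕ+, A ∈ (Finset.Iic N).powerset := by
    intro A
    refine ⟨Nat.succPNat (A.sup (fun x => (x : ℕ))), Finset.mem_powerset.2 fun x hx => ?_⟩
    rw [Finset.mem_Iic, ← PNat.coe_le_coe]
    exact le_trans (Finset.le_sup (f := fun x : ℕ+ => (x : ℕ)) hx) (Nat.le_succ _)
  have htend1 : Tendsto (fun N : ℕ+ => Ee a (Finset.Iic N) r) atTop (𝓝 (multT r s)) := by
    have h1 := hind.comp (tendsto_atTop_finset_of_monotone hmono hex)
    refine h1.congr fun N => ?_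
    show ∑ A ∈ (Finset.Iic N).powerset, (if A.card = r then ∏ n ∈ A, a n else 0)
      = Ee a (Finset.Iic N) r
    rw [Ee, Finset.powersetCard_eq_filter, Finset.sum_filter]
  -- convergence of power sums along Iic
  have hmono2 : Monotone (fun N : ℕ+ => Finset.Iic N) := fun M N h => Finset.Iic_subset_Iic.2 h
  have hex2 : ∀ n : ℕ+, ∃ N : ℕ+, n ∈ Finset.Iic N := fun n => ⟨n, Finset.mem_Iic.2 le_rfl⟩
  have hPk : ∀ k : ℕ, 1 ≤ k →
      Tendsto (fun N : ℕ+ => Pp a (Finset.Iic N) k) atTop (𝓝 (tFun ((k : ℝ) * s))) := by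
    intro k hk
    have h1 := (htF k hk).comp (tendsto_atTop_finset_of_monotone hmono2 hex2)
    exact h1
  have htend2 : Tendsto (fun N : ℕ+ => Gg (Pp a (Finset.Iic N)) r) atTop
      (𝓝 (Gg (fun k => tFun ((k : ℝ) * s)) r)) := by
    simp only [Gg]
    refine tendsto_finset_sum _ fun c hc => ?_
    refine Tendsto.const_mul _ ?_
    refine tendsto_finset_prod _ fun i _ => ?_
    exact (hPk ((i : ℕ) + 1) (by omega)).pow _
  have hEG : ∀ N : ℕ+, Ee a (Finset.Iic N) r = Gg (Pp a (Finset.Iic N)) r :=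
    fun N => Ee_eq_Gg a (Finset.Iic N) r
  have htend1' : Tendsto (fun N : ℕ+ => Gg (Pp a (Finset.Iic N)) r) atTop (𝓝 (multT r s)) := by
    refine htend1.congr fun N => hEG N
  show multT r s = Gg (fun k => tFun ((k : ℝ) * s)) r
  exact tendsto_nhds_unique htend1' htend2
end

section
/- Let r ≥ 1 be an integer and s ∈ ℝ with s > 1. Then t_r⋆(s) = ∑ 1 / (1^{c₁} c₁! · 2^{c₂} c₂! ⋯ r^{c_r} c_r!) · t(s)^{c₁} t(2s)^{c₂} ⋯ t(rs)^{c_r}, where the sum runs over all tuples (c₁,…,c_r) of nonnegative integers satisfying c₁ + 2c₂ + ⋯ + r·c_r = r. -/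
open scoped ENNReal

/-- The multiple `t`-star function at identical arguments:
`t_r⋆(s) = ∑_{n₁ ≥ ⋯ ≥ n_r ≥ 1} ((2n₁−1)⋯(2n_r−1))^{-s}`. -/
noncomputable def multTStar (r : ℕ) (s : ℝ) : ℝ :=
  ∑' f : {f : Fin r → ℕ+ // Antitone f},
    ∏ i, (((2 * (f.1 i : ℕ) - 1 : ℕ) : ℝ) ^ s)⁻¹

section Equiv
variable {α : Type*} [LinearOrder α]

/-- The descending sorted list of a multiset. -/
def descList (M : Multiset α) : List α := (Multiset.sort M (· ≤ ·)).reverse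

lemma descList_length (M : Multiset α) : (descList M).length = Multiset.card M := by
  simp [descList]

lemma descList_sorted (M : Multiset α) : (descList M).Pairwise (· ≥ ·) := by
  rw [descList, List.pairwise_reverse]
  exact Multiset.pairwise_sort M (· ≤ ·)

lemma descList_coe (M : Multiset α) : (descList M : Multiset α) = M := by
  rw [descList, Multiset.coe_reverse]
  exact Multiset.sort_eq M (· ≤ ·)

/-- Antitone tuples of length `r` are equivalent to multisets of cardinality `r`. -/
noncomputable def antitoneEquivMultiset (α : Type*) [LinearOrder α] (r : ℕ) :
    {f : Fin r → α // Antitone f} ≃ {M : Multiset α // Multiset.card M = r} where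
  toFun f := ⟨(List.ofFn f.1 : List α), by simp⟩
  invFun M :=
    ⟨fun i => (descList M.1).get (Fin.cast (by rw [descList_length, M.2]) i), by
      intro i j hij
      rcases eq_or_lt_of_le hij with rfl | h
      · exact le_rfl
      · exact (descList_sorted M.1).rel_get_of_lt (by simpa using h)⟩
  left_inv := by
    rintro ⟨f, hf⟩
    have hsorted : (List.ofFn f).Pairwise (· ≥ ·) :=
      List.pairwise_ofFn.2 fun i j h => hf h.le
    have hperm : List.Perm (descList ((List.ofFn f : List α) : Multiset α)) (List.ofFn f) := by
      rw [← Multiset.coe_eq_coe, descList_coe]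
    have heq : descList ((List.ofFn f : List α) : Multiset α) = List.ofFn f :=
      List.Perm.eq_of_pairwise' (descList_sorted _) hsorted hperm
    apply Subtype.ext
    funext i
    dsimp only
    rw [List.get_of_eq heq, List.get_ofFn]
    congr 1
  right_inv := by
    rintro ⟨M, hM⟩
    apply Subtype.ext
    dsimp only
    have h1 : List.ofFn (fun i : Fin r =>
        (descList M).get (Fin.cast (by rw [descList_length, hM]) i)) = descList M := by
      rw [List.ofFn_congr (by rw [descList_length, hM] : r = (descList M).length)]
      simp [List.ofFn_get]
    rw [h1, descList_coe]

end Equiv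


noncomputable def HM (x : ℕ+ → ℝ≥0∞) (r : ℕ) : ℝ≥0∞ :=
  ∑' M : {M : Multiset ℕ+ // Multiset.card M = r}, ((M.1.map x).prod)

noncomputable def Psum (x : ℕ+ → ℝ≥0∞) (k : ℕ) : ℝ≥0∞ := ∑' n : ℕ+, x n ^ k

/-- The Newton bijection. -/
def newtonEquiv (r : ℕ) :
    (Σ k : Fin r, ℕ+ × {M : Multiset ℕ+ // Multiset.card M = r - (k.1 + 1)}) ≃
    (Σ M : {M : Multiset ℕ+ // Multiset.card M = r},
      {p : ℕ+ × ℕ // p.2 < M.1.count p.1}) where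
  toFun t :=
    ⟨⟨t.2.2.1 + Multiset.replicate (t.1.1 + 1) t.2.1, by
        rw [Multiset.card_add, Multiset.card_replicate, t.2.2.2]
        have := t.1.2; omega⟩,
      ⟨(t.2.1, t.1.1), by simp⟩⟩
  invFun u :=
    ⟨⟨u.2.1.2, lt_of_lt_of_le u.2.2 (le_of_le_of_eq (Multiset.count_le_card _ _) u.1.2)⟩,
      u.2.1.1,
      ⟨u.1.1 - Multiset.replicate (u.2.1.2 + 1) u.2.1.1, by
        rw [Multiset.card_sub (Multiset.le_count_iff_replicate_le.mp u.2.2),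
          Multiset.card_replicate]
        simp only [Fin.val_mk]
        have := u.1.2
        omega⟩⟩
  left_inv := by
    rintro ⟨⟨k, hk⟩, m, M', hM'⟩
    have hX : (M' + Multiset.replicate (k + 1) m) - Multiset.replicate (k + 1) m = M' := by
      simp
    exact congrArg _ (Prod.ext rfl (Subtype.ext hX))
  right_inv := by
    rintro ⟨⟨M, hM⟩, ⟨v, k⟩, hvk⟩
    have hle : Multiset.replicate (k + 1) v ≤ M := Multiset.le_count_iff_replicate_le.mp hvk
    have hX : (M - Multiset.replicate (k + 1) v) + Multiset.replicate (k + 1) v = M :=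
      tsub_add_cancel_of_le hle
    refine Sigma.ext (Subtype.ext hX) ?_
    dsimp only
    refine (Subtype.heq_iff_coe_eq fun p => by rw [hX]).mpr rfl

lemma inner_count (r : ℕ) (M : Multiset ℕ+) (hM : Multiset.card M = r) (c : ℝ≥0∞) :
    ∑' _p : {p : ℕ+ × ℕ // p.2 < M.count p.1}, c = (r : ℝ≥0∞) * c := by
  classical
  set s : Finset (ℕ+ × ℕ) := M.toFinset.biUnion (fun v => {v} ×ˢ Finset.range (M.count v)) with hs
  have hmem : ∀ p : ℕ+ × ℕ, p ∈ s ↔ p.2 < M.count p.1 := by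
    intro p
    simp only [hs, Finset.mem_biUnion, Finset.mem_product, Finset.mem_singleton, Finset.mem_range,
      Multiset.mem_toFinset]
    constructor
    · rintro ⟨v, hv, rfl, h⟩; exact h
    · intro h
      exact ⟨p.1, by rw [← Multiset.count_pos]; omega, rfl, h⟩
  have hcard : s.card = r := by
    rw [hs, Finset.card_biUnion]
    · rw [← hM, ← Multiset.toFinset_sum_count_eq M]
      refine Finset.sum_congr rfl fun v _ => by simp
    · intro a _ b _ hab
      simp only [Finset.disjoint_left]
      rintro p hp hq
      simp only [Finset.mem_product, Finset.mem_singleton] at hp hq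
      exact hab (by rw [← hp.1, hq.1])
  have e : {p : ℕ+ × ℕ // p ∈ s} ≃ {p : ℕ+ × ℕ // p.2 < M.count p.1} :=
    Equiv.subtypeEquivRight hmem
  calc ∑' _p : {p : ℕ+ × ℕ // p.2 < M.count p.1}, c
      = ∑' _p : {p : ℕ+ × ℕ // p ∈ s}, c := (e.tsum_eq fun _ => c).symm
    _ = ∑ _p ∈ s, c := Finset.tsum_subtype s fun _ => c
    _ = s.card • c := Finset.sum_const c
    _ = (r : ℝ≥0∞) * c := by rw [hcard, nsmul_eq_mul]

lemma newton (x : ℕ+ → ℝ≥0∞) (r : ℕ) :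
    (r : ℝ≥0∞) * HM x r =
      ∑ k ∈ Finset.range r, Psum x (k + 1) * HM x (r - (k + 1)) := by
  have step1 : ∀ k : ℕ, Psum x (k + 1) * HM x (r - (k + 1)) =
      ∑' p : ℕ+ × {M : Multiset ℕ+ // Multiset.card M = r - (k + 1)},
        x p.1 ^ (k + 1) * ((p.2.1.map x).prod) := by
    intro k
    rw [eq_comm, ENNReal.tsum_prod']
    dsimp only
    calc ∑' (a : ℕ+), ∑' (b : {M : Multiset ℕ+ // Multiset.card M = r - (k + 1)}),
          x a ^ (k + 1) * ((b.1.map x).prod)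
        = ∑' (a : ℕ+), x a ^ (k + 1) * HM x (r - (k + 1)) :=
          tsum_congr fun a => by rw [HM]; exact ENNReal.tsum_mul_left
      _ = Psum x (k + 1) * HM x (r - (k + 1)) := ENNReal.tsum_mul_right
  rw [Finset.sum_congr rfl (fun k _ => step1 k),
    ← Fin.sum_univ_eq_sum_range (fun k =>
      ∑' p : ℕ+ × {M : Multiset ℕ+ // Multiset.card M = r - (k + 1)},
        x p.1 ^ (k + 1) * ((p.2.1.map x).prod)),
    ← tsum_fintype (L := SummationFilter.unconditional _),
    ← ENNReal.tsum_sigma (f := fun (k : Fin r) (p : ℕ+ × {M : Multiset ℕ+ // Multiset.card M = r - (k.1 + 1)}) =>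
      x p.1 ^ (k.1 + 1) * ((p.2.1.map x).prod))]
  symm
  calc ∑' t : (Σ k : Fin r, ℕ+ × {M : Multiset ℕ+ // Multiset.card M = r - (k.1 + 1)}),
        x t.2.1 ^ (t.1.1 + 1) * ((t.2.2.1.map x).prod)
      = ∑' t : (Σ k : Fin r, ℕ+ × {M : Multiset ℕ+ // Multiset.card M = r - (k.1 + 1)}),
        (((newtonEquiv r t).1.1.map x).prod) := by
        refine tsum_congr fun t => ?_
        simp only [newtonEquiv, Equiv.coe_fn_mk]
        rw [Multiset.map_add, Multiset.prod_add, Multiset.map_replicate,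
          Multiset.prod_replicate, mul_comm]
    _ = ∑' u : (Σ M : {M : Multiset ℕ+ // Multiset.card M = r},
          {p : ℕ+ × ℕ // p.2 < M.1.count p.1}), ((u.1.1.map x).prod) :=
        (newtonEquiv r).tsum_eq (fun u => ((u.1.1.map x).prod))
    _ = ∑' M : {M : Multiset ℕ+ // Multiset.card M = r},
          ∑' _p : {p : ℕ+ × ℕ // p.2 < M.1.count p.1}, ((M.1.map x).prod) :=
        ENNReal.tsum_sigma (f := fun (M : {M : Multiset ℕ+ // Multiset.card M = r})
          (_ : {p : ℕ+ × ℕ // p.2 < M.1.count p.1}) => ((M.1.map x).prod))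
    _ = ∑' M : {M : Multiset ℕ+ // Multiset.card M = r}, (r : ℝ≥0∞) * ((M.1.map x).prod) :=
        tsum_congr fun M => inner_count r M.1 M.2 _
    _ = (r : ℝ≥0∞) * HM x r := ENNReal.tsum_mul_left


def WT (N n : ℕ) : Finset (Fin N → ℕ) :=
  (Fintype.piFinset fun _ : Fin N => Finset.range (N + 1)).filter
    fun c => ∑ i : Fin N, (i.1 + 1) * c i = n

def Zc {N : ℕ} (c : Fin N → ℕ) : ℕ := ∏ i : Fin N, ((i.1 + 1) ^ c i * (c i).factorial)

lemma Zc_pos {N : ℕ} (c : Fin N → ℕ) : 0 < Zc c :=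
  Finset.prod_pos fun i _ => Nat.mul_pos (Nat.pow_pos (Nat.succ_pos _))
    (Nat.factorial_pos _)

noncomputable def Gfun (x : ℕ+ → ℝ≥0∞) (N n : ℕ) : ℝ≥0∞ :=
  ∑ c ∈ WT N n, ((Zc c : ℝ≥0∞))⁻¹ * ∏ i : Fin N, Psum x (i.1 + 1) ^ c i

lemma mem_WT {N n : ℕ} {c : Fin N → ℕ} :
    c ∈ WT N n ↔ (∀ i, c i ≤ N) ∧ ∑ i : Fin N, (i.1 + 1) * c i = n := by
  simp [WT, Fintype.mem_piFinset, Nat.lt_succ_iff]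

lemma WT_zero (N : ℕ) : WT N 0 = {fun _ => 0} := by
  ext c
  rw [Finset.mem_singleton, mem_WT]
  constructor
  · rintro ⟨-, h⟩
    funext i
    have h2 := Finset.sum_eq_zero_iff.mp h i (Finset.mem_univ i)
    rcases Nat.mul_eq_zero.mp h2 with h3 | h3
    · omega
    · exact h3
  · rintro rfl
    exact ⟨fun i => Nat.zero_le _, by simp⟩

lemma Gfun_zero (x : ℕ+ → ℝ≥0∞) (N : ℕ) : Gfun x N 0 = 1 := by
  rw [Gfun, WT_zero, Finset.sum_singleton]
  simp [Zc]

section Grec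
variable {N n : ℕ} (x : ℕ+ → ℝ≥0∞)

/-- split a weighted sum at coordinate `i` after an update -/
lemma weight_update {N : ℕ} (c : Fin N → ℕ) (i : Fin N) (b : ℕ) :
    ∑ j : Fin N, (j.1 + 1) * (Function.update c i b j) =
      (i.1 + 1) * b + ∑ j ∈ Finset.univ.erase i, (j.1 + 1) * c j := by
  rw [← Finset.add_sum_erase _ (fun j => (j.1 + 1) * Function.update c i b j)
    (Finset.mem_univ i)]
  congr 1
  · rw [Function.update_self]
  · exact Finset.sum_congr rfl fun j hj => by
      rw [Function.update_of_ne (Finset.ne_of_mem_erase hj)]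

lemma prod_update {M : Type*} [CommMonoid M] {N : ℕ} (g : Fin N → ℕ → M) (c : Fin N → ℕ)
    (i : Fin N) (b : ℕ) :
    ∏ j : Fin N, g j (Function.update c i b j) =
      g i b * ∏ j ∈ Finset.univ.erase i, g j (c j) := by
  rw [← Finset.mul_prod_erase _ (fun j => g j (Function.update c i b j)) (Finset.mem_univ i)]
  congr 1
  · rw [Function.update_self]
  · exact Finset.prod_congr rfl fun j hj => by
      rw [Function.update_of_ne (Finset.ne_of_mem_erase hj)]

lemma prod_split {M : Type*} [CommMonoid M] {N : ℕ} (g : Fin N → ℕ → M) (c : Fin N → ℕ)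
    (i : Fin N) :
    ∏ j : Fin N, g j (c j) = g i (c i) * ∏ j ∈ Finset.univ.erase i, g j (c j) :=
  (Finset.mul_prod_erase _ _ (Finset.mem_univ i)).symm

lemma G_key {N n : ℕ} (hnN : n ≤ N) (i : Fin N) (hi : i.1 < n) :
    ∑ c ∈ WT N n, (((i.1 + 1) * c i : ℕ) : ℝ≥0∞) *
      (((Zc c : ℝ≥0∞))⁻¹ * ∏ j : Fin N, Psum x (j.1 + 1) ^ c j) =
    Psum x (i.1 + 1) * Gfun x N (n - (i.1 + 1)) := by
  classical
  rw [Gfun, Finset.mul_sum]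
  rw [← Finset.sum_filter_of_ne (p := fun c : Fin N → ℕ => c i ≠ 0)
    (fun c _ hne => by
      intro h0
      apply hne
      rw [h0, Nat.mul_zero, Nat.cast_zero, zero_mul])]
  refine Finset.sum_nbij' (fun c => Function.update c i (c i - 1))
    (fun c' => Function.update c' i (c' i + 1)) ?_ ?_ ?_ ?_ ?_
  · -- maps into WT N (n - (i.1+1))
    intro c hc
    rw [Finset.mem_filter] at hc
    obtain ⟨hcW, hci⟩ := hc
    obtain ⟨hbd, hwt⟩ := mem_WT.mp hcW
    refine mem_WT.mpr ⟨fun j => ?_, ?_⟩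
    · rcases eq_or_ne j i with rfl | hj
      · rw [Function.update_self]; exact le_trans (Nat.sub_le _ _) (hbd j)
      · rw [Function.update_of_ne hj]; exact hbd j
    · rw [weight_update]
      have hsplit := Finset.add_sum_erase Finset.univ (fun j : Fin N => (j.1 + 1) * c j)
        (Finset.mem_univ i)
      rw [hwt] at hsplit
      have hmm : (i.1 + 1) * (c i - 1) + (i.1 + 1) = (i.1 + 1) * c i := by
        rw [← Nat.mul_succ]
        congr 1
        omega
      omega
  · -- inverse maps into the filtered set
    intro c' hc'
    obtain ⟨hbd, hwt⟩ := mem_WT.mp hc'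
    have hterm : (i.1 + 1) * c' i ≤ n - (i.1 + 1) := by
      rw [← hwt]
      exact Finset.single_le_sum (f := fun j : Fin N => (j.1 + 1) * c' j)
        (fun j _ => Nat.zero_le _) (Finset.mem_univ i)
    have hle : c' i ≤ (i.1 + 1) * c' i := Nat.le_mul_of_pos_left _ (Nat.succ_pos _)
    rw [Finset.mem_filter]
    refine ⟨mem_WT.mpr ⟨fun j => ?_, ?_⟩, ?_⟩
    · rcases eq_or_ne j i with rfl | hj
      · rw [Function.update_self]; omega
      · rw [Function.update_of_ne hj]; exact hbd j
    · rw [weight_update]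
      have hsplit := Finset.add_sum_erase Finset.univ (fun j : Fin N => (j.1 + 1) * c' j)
        (Finset.mem_univ i)
      rw [hwt] at hsplit
      have hmm : (i.1 + 1) * (c' i + 1) = (i.1 + 1) * c' i + (i.1 + 1) := Nat.mul_succ _ _
      omega
    · rw [Function.update_self]; omega
  · -- left inverse
    intro c hc
    rw [Finset.mem_filter] at hc
    funext j
    rcases eq_or_ne j i with rfl | hj
    · rw [Function.update_self, Function.update_self]
      have : c j ≠ 0 := hc.2
      omega
    · rw [Function.update_of_ne hj, Function.update_of_ne hj]
  · -- right inverse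
    intro c' _
    funext j
    rcases eq_or_ne j i with rfl | hj
    · rw [Function.update_self, Function.update_self]
      omega
    · rw [Function.update_of_ne hj, Function.update_of_ne hj]
  · -- the terms match
    intro c hc
    rw [Finset.mem_filter] at hc
    obtain ⟨hcW, hci⟩ := hc
    have hZ : Zc c = ((i.1 + 1) * c i) * Zc (Function.update c i (c i - 1)) := by
      rw [Zc, Zc, prod_update (fun j b => (j.1 + 1) ^ b * b.factorial),
        prod_split (fun j b => (j.1 + 1) ^ b * b.factorial) c i, ← mul_assoc]
      congr 1
      obtain ⟨m', hm'⟩ : ∃ m', c i = m' + 1 := ⟨c i - 1, by omega⟩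
      rw [hm', Nat.add_sub_cancel, pow_succ, Nat.factorial_succ]
      ring
    have hP : ∏ j : Fin N, Psum x (j.1 + 1) ^ c j =
        Psum x (i.1 + 1) * ∏ j : Fin N, Psum x (j.1 + 1) ^ (Function.update c i (c i - 1)) j := by
      rw [prod_update (fun j b => Psum x (j.1 + 1) ^ b),
        prod_split (fun j b => Psum x (j.1 + 1) ^ b) c i, ← mul_assoc]
      congr 1
      obtain ⟨m', hm'⟩ : ∃ m', c i = m' + 1 := ⟨c i - 1, by omega⟩
      rw [hm', Nat.add_sub_cancel, pow_succ]
      ring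
    have ha0 : (((i.1 + 1) * c i : ℕ) : ℝ≥0∞) ≠ 0 := by
      simp only [ne_eq, Nat.cast_eq_zero]
      exact Nat.mul_ne_zero (Nat.succ_ne_zero _) hci
    have hatop : (((i.1 + 1) * c i : ℕ) : ℝ≥0∞) ≠ ∞ := ENNReal.natCast_ne_top _
    have hx : ∀ (A Z P Q : ℝ≥0∞), A * A⁻¹ = 1 →
        A * (A⁻¹ * Z⁻¹ * (P * Q)) = P * (Z⁻¹ * Q) := by
      intro A Z P Q h
      calc A * (A⁻¹ * Z⁻¹ * (P * Q)) = (A * A⁻¹) * (P * (Z⁻¹ * Q)) := by ring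
        _ = P * (Z⁻¹ * Q) := by rw [h, one_mul]
    rw [hZ, hP, Nat.cast_mul ((i.1 + 1) * c i) (Zc (Function.update c i (c i - 1))),
      ENNReal.mul_inv (Or.inl ha0) (Or.inl hatop)]
    exact hx _ _ _ _ (ENNReal.mul_inv_cancel ha0 hatop)

lemma G_rec {N n : ℕ} (hn1 : 1 ≤ n) (hnN : n ≤ N) :
    (n : ℝ≥0∞) * Gfun x N n =
      ∑ k ∈ Finset.range n, Psum x (k + 1) * Gfun x N (n - (k + 1)) := by
  classical
  rw [Gfun, Finset.mul_sum]
  have hL : ∀ c ∈ WT N n,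
      (n : ℝ≥0∞) * (((Zc c : ℝ≥0∞))⁻¹ * ∏ i : Fin N, Psum x (i.1 + 1) ^ c i) =
      ∑ i : Fin N, (((i.1 + 1) * c i : ℕ) : ℝ≥0∞) *
        (((Zc c : ℝ≥0∞))⁻¹ * ∏ j : Fin N, Psum x (j.1 + 1) ^ c j) := by
    intro c hc
    rw [← Finset.sum_mul]
    congr 1
    rw [← Nat.cast_sum, (mem_WT.mp hc).2]
  rw [Finset.sum_congr rfl hL, Finset.sum_comm]
  rw [← Finset.sum_filter_of_ne (p := fun i : Fin N => i.1 < n) (fun i _ hne => by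
    by_contra hge
    apply hne
    refine Finset.sum_eq_zero fun c hc => ?_
    obtain ⟨hbd, hwt⟩ := mem_WT.mp hc
    have hterm : (i.1 + 1) * c i ≤ n := by
      rw [← hwt]
      exact Finset.single_le_sum (f := fun j : Fin N => (j.1 + 1) * c j)
        (fun j _ => Nat.zero_le _) (Finset.mem_univ i)
    have hci : c i = 0 := by
      by_contra hci
      have h2 : i.1 + 1 ≤ (i.1 + 1) * c i := Nat.le_mul_of_pos_right _ (by omega)
      omega
    rw [hci, Nat.mul_zero, Nat.cast_zero, zero_mul])]
  refine Finset.sum_nbij' (fun i : Fin N => i.1)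
    (fun k => ⟨k % N, Nat.mod_lt _ (by omega)⟩) ?_ ?_ ?_ ?_ ?_
  · intro i hi
    rw [Finset.mem_filter] at hi
    exact Finset.mem_range.mpr hi.2
  · intro k hk
    rw [Finset.mem_range] at hk
    rw [Finset.mem_filter]
    have : k % N = k := Nat.mod_eq_of_lt (by omega)
    refine ⟨Finset.mem_univ _, by simpa [this] using hk⟩
  · intro i hi
    rw [Finset.mem_filter] at hi
    apply Fin.ext
    simp [Nat.mod_eq_of_lt (lt_of_lt_of_le hi.2 hnN)]
  · intro k hk
    rw [Finset.mem_range] at hk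
    simp [Nat.mod_eq_of_lt (show k < N by omega)]
  · intro i hi
    rw [Finset.mem_filter] at hi
    exact G_key x hnN i hi.2

end Grec


lemma HM_zero (x : ℕ+ → ℝ≥0∞) : HM x 0 = 1 := by
  rw [HM, tsum_eq_single (⟨0, rfl⟩ : {M : Multiset ℕ+ // Multiset.card M = 0})
    (fun b hb => absurd (Subtype.ext (Multiset.card_eq_zero.mp b.2)) hb)]
  simp

lemma HM_eq_Gfun (x : ℕ+ → ℝ≥0∞) (N : ℕ) : ∀ n, n ≤ N → HM x n = Gfun x N n := by
  intro n
  induction n using Nat.strong_induction_on with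
  | _ n ih =>
    intro hnN
    rcases Nat.eq_zero_or_pos n with rfl | hn
    · rw [HM_zero, Gfun_zero]
    · have h1 := newton x n
      have h2 := G_rec x hn hnN
      have h3 : ∑ k ∈ Finset.range n, Psum x (k + 1) * HM x (n - (k + 1)) =
          ∑ k ∈ Finset.range n, Psum x (k + 1) * Gfun x N (n - (k + 1)) :=
        Finset.sum_congr rfl fun k hk => by
          rw [ih (n - (k + 1)) (by rw [Finset.mem_range] at hk; omega) (by omega)]
      have hmain : (n : ℝ≥0∞) * HM x n = (n : ℝ≥0∞) * Gfun x N n := by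
        rw [h1, h3, ← h2]
      have hn0 : (n : ℝ≥0∞) ≠ 0 := Nat.cast_ne_zero.mpr (by omega)
      have hnt : (n : ℝ≥0∞) ≠ ∞ := ENNReal.natCast_ne_top n
      calc HM x n = (n : ℝ≥0∞)⁻¹ * ((n : ℝ≥0∞) * HM x n) := by
            rw [← mul_assoc, ENNReal.inv_mul_cancel hn0 hnt, one_mul]
        _ = (n : ℝ≥0∞)⁻¹ * ((n : ℝ≥0∞) * Gfun x N n) := by rw [hmain]
        _ = Gfun x N n := by rw [← mul_assoc, ENNReal.inv_mul_cancel hn0 hnt, one_mul]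

section Conversion

variable {s : ℝ} (hs : 1 < s)

/-- the real summand -/
noncomputable def aFun (s : ℝ) (n : ℕ+) : ℝ := (((2 * (n : ℕ) - 1 : ℕ) : ℝ) ^ s)⁻¹

/-- the `ℝ≥0∞`-valued summand -/
noncomputable def xFun (s : ℝ) (n : ℕ+) : ℝ≥0∞ := ENNReal.ofReal (aFun s n)

lemma base_ge_one (n : ℕ+) : (1 : ℝ) ≤ ((2 * (n : ℕ) - 1 : ℕ) : ℝ) := by
  have h : (1 : ℕ) ≤ 2 * (n : ℕ) - 1 := by
    have h2 : 1 ≤ (n : ℕ) := n.one_le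
    omega
  exact_mod_cast h

lemma aFun_nonneg (s : ℝ) (n : ℕ+) : 0 ≤ aFun s n := by
  have h := Real.rpow_nonneg (le_trans zero_le_one (base_ge_one n)) s
  exact inv_nonneg.mpr h

lemma aFun_le_one (hs : 1 < s) (n : ℕ+) : aFun s n ≤ 1 := by
  rw [aFun]
  have h1 : (1 : ℝ) ≤ ((2 * (n : ℕ) - 1 : ℕ) : ℝ) ^ s :=
    Real.one_le_rpow (base_ge_one n) (by linarith)
  rw [inv_le_one_iff₀]
  right
  exact h1

lemma summable_aFun (hs : 1 < s) : Summable (aFun s) := by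
  have h0 : Summable (fun n : ℕ => (((n : ℝ)) ^ s)⁻¹) := Real.summable_nat_rpow_inv.mpr hs
  have h1 : Summable (fun n : ℕ+ => (((n : ℕ) : ℝ) ^ s)⁻¹) :=
    h0.comp_injective (fun a b h => PNat.coe_injective h)
  refine Summable.of_nonneg_of_le (fun n => aFun_nonneg s n) (fun n => ?_) h1
  rw [aFun]
  have hb : ((n : ℕ) : ℝ) ≤ ((2 * (n : ℕ) - 1 : ℕ) : ℝ) := by
    have := n.2
    exact_mod_cast (by omega : (n : ℕ) ≤ 2 * (n : ℕ) - 1)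
  have hpos : (0 : ℝ) < ((n : ℕ) : ℝ) ^ s :=
    Real.rpow_pos_of_pos (by exact_mod_cast n.2) s
  exact inv_anti₀ hpos (Real.rpow_le_rpow (by positivity) hb (by linarith))

lemma summable_aFun_pow (hs : 1 < s) {k : ℕ} (hk : 1 ≤ k) :
    Summable (fun n : ℕ+ => aFun s n ^ k) := by
  refine Summable.of_nonneg_of_le (fun n => pow_nonneg (aFun_nonneg s n) k)
    (fun n => pow_le_of_le_one (aFun_nonneg s n) (aFun_le_one hs n) (by omega))
    (summable_aFun hs)

lemma Psum_eq (hs : 1 < s) {k : ℕ} (hk : 1 ≤ k) :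
    Psum (xFun s) k = ENNReal.ofReal (∑' n : ℕ+, aFun s n ^ k) := by
  rw [Psum, ENNReal.ofReal_tsum_of_nonneg (fun n => pow_nonneg (aFun_nonneg s n) k)
    (summable_aFun_pow hs hk)]
  exact tsum_congr fun n => by
    rw [xFun, ← ENNReal.ofReal_pow (aFun_nonneg s n)]

lemma Psum_ne_top (hs : 1 < s) {k : ℕ} (hk : 1 ≤ k) : Psum (xFun s) k ≠ ∞ := by
  rw [Psum_eq hs hk]; exact ENNReal.ofReal_ne_top

lemma aFun_pow (hs : 1 < s) (k : ℕ) (n : ℕ+) :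
    aFun s n ^ k = (((2 * (n : ℕ) - 1 : ℕ) : ℝ) ^ ((k : ℝ) * s))⁻¹ := by
  have hb : (0 : ℝ) ≤ ((2 * (n : ℕ) - 1 : ℕ) : ℝ) := le_trans zero_le_one (base_ge_one n)
  rw [aFun, mul_comm (k : ℝ) s, Real.rpow_mul hb, Real.rpow_natCast, inv_pow]

lemma tFun_eq (hs : 1 < s) {k : ℕ} (hk : 1 ≤ k) :
    tFun ((k : ℝ) * s) = (Psum (xFun s) k).toReal := by
  rw [Psum_eq hs hk, ENNReal.toReal_ofReal
    (tsum_nonneg (fun n => pow_nonneg (aFun_nonneg s n) k)), tFun]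
  exact tsum_congr fun n => (aFun_pow hs k n).symm

lemma multTStar_eq (hs : 1 < s) (r : ℕ) : multTStar r s = (HM (xFun s) r).toReal := by
  have key : HM (xFun s) r =
      ∑' f : {f : Fin r → ℕ+ // Antitone f}, ENNReal.ofReal (∏ i, aFun s (f.1 i)) := by
    rw [HM, ← (antitoneEquivMultiset ℕ+ r).tsum_eq
      (fun M : {M : Multiset ℕ+ // Multiset.card M = r} => ((M.1.map (xFun s)).prod))]
    refine tsum_congr fun f => ?_
    have h1 : ((antitoneEquivMultiset ℕ+ r f).1.map (xFun s)).prod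
        = ∏ i, xFun s (f.1 i) := by
      show (((List.ofFn f.1 : List ℕ+) : Multiset ℕ+).map (xFun s)).prod = _
      rw [Multiset.map_coe, Multiset.prod_coe, List.map_ofFn, List.prod_ofFn]
      rfl
    rw [h1, ENNReal.ofReal_prod_of_nonneg (fun i _ => aFun_nonneg s (f.1 i))]
    rfl
  rw [key, ENNReal.tsum_toReal_eq (fun f => ENNReal.ofReal_ne_top)]
  rw [multTStar]
  exact tsum_congr fun f => by
    rw [ENNReal.toReal_ofReal (Finset.prod_nonneg fun i _ => aFun_nonneg s (f.1 i))]
    rfl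

/-- For `r ≥ 1` and real `s > 1`:
`t_r⋆(s) = ∑_{c₁+2c₂+⋯+rc_r=r} 1/(1^{c₁}c₁!⋯r^{c_r}c_r!) · t(s)^{c₁}⋯t(rs)^{c_r}`. -/
theorem multTStar_explicit (r : ℕ) (hr : 1 ≤ r) (s : ℝ) (hs : 1 < s) :
    multTStar r s =
      ∑ c ∈ weightedTuples r,
        1 / (∏ i : Fin r, ((((i : ℕ) + 1 : ℕ) : ℝ) ^ c i * ((c i).factorial : ℝ))) *
        ∏ i : Fin r, tFun ((((i : ℕ) + 1 : ℕ) : ℝ) * s) ^ c i := by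
  have hWT : weightedTuples r = WT r r := rfl
  rw [multTStar_eq hs r, HM_eq_Gfun (xFun s) r r le_rfl, Gfun]
  have hterm_ne_top : ∀ c ∈ WT r r,
      ((Zc c : ℝ≥0∞))⁻¹ * ∏ i : Fin r, Psum (xFun s) (i.1 + 1) ^ c i ≠ ∞ := by
    intro c _
    refine ENNReal.mul_ne_top ?_ ?_
    · rw [ENNReal.inv_ne_top]
      exact_mod_cast (Zc_pos c).ne'
    · exact ENNReal.prod_ne_top fun i _ =>
        ENNReal.pow_ne_top (Psum_ne_top hs (Nat.succ_le_succ (Nat.zero_le _)))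
  rw [ENNReal.toReal_sum hterm_ne_top, hWT]
  refine Finset.sum_congr rfl fun c hc => ?_
  rw [ENNReal.toReal_mul, ENNReal.toReal_inv, ENNReal.toReal_prod]
  congr 1
  · rw [one_div]
    congr 1
    rw [ENNReal.toReal_natCast, Zc]
    push_cast
    rfl
  · refine Finset.prod_congr rfl fun i _ => ?_
    rw [ENNReal.toReal_pow, tFun_eq hs (Nat.succ_le_succ (Nat.zero_le _))]

end Conversion
end
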